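/- Let X and Y be forests over an alphabet 𝒳 and let M be a tree mapping between X and Y. Then there exists an edit script δ̄_M using only replacements, deletions, and insertions such that δ̄_M(X) = Y, and such that: for each (i,j) ∈ M the script contains the replacement rep_{i, y_j}; for each index i of X not appearing in M the script contains the deletion del_i; for each index j of Y not appearing in M the script contains an insertion of the label y_j; and the script contains no other edits. -/

import Mathlib

namespace TED

/-- A tree over an alphabet `α`: a label together with a (possibly empty) list of children. -/
inductive PTree (α : Type) where
  | node : α → List (PTree α) → PTree α

/-- A forest over `α` is a finite list of trees; `[]` is the empty forest `ε`. -/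
abbrev Forest (α : Type) := List (PTree α)

namespace PTree

/-- The label of (the root of) a tree. -/
def label {α : Type} : PTree α → α
  | node a _ => a

/-- The children of (the root of) a tree. -/
def children {α : Type} : PTree α → List (PTree α)
  | node _ cs => cs

mutual
  /-- The number of nodes of a tree. -/
  def size {α : Type} : PTree α → ℕ
    | node _ cs => 1 + sizeL cs
  /-- The number of nodes of a forest. -/
  def sizeL {α : Type} : List (PTree α) → ℕ
    | [] => 0
    | t :: ts => size t + sizeL ts
end

mutual
  /-- The pre-order list of all subtrees of a tree. -/
  def subtreesT {α : Type} : PTree α → List (PTree α)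
    | node a cs => node a cs :: subtreesL cs
  /-- The pre-order list of all subtrees of a forest. -/
  def subtreesL {α : Type} : List (PTree α) → List (PTree α)
    | [] => []
    | t :: ts => subtreesT t ++ subtreesL ts
end

end PTree

open PTree

/-- The pre-order `π(X)` of a forest: the list of all its subtrees. -/
def preorder {α : Type} (F : Forest α) : List (PTree α) := PTree.subtreesL F

/-- The size `|X|` of a forest: the length of its pre-order. -/
def fsize {α : Type} (F : Forest α) : ℕ := (preorder F).length

/-- The `i`-th subtree `x̄_i` (1-indexed pre-order) of a forest, if it exists. -/
def treeAt {α : Type} (F : Forest α) (i : ℕ) : Option (PTree α) := (preorder F)[i - 1]?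

/-- The label `x_i` of the `i`-th subtree, as an element of `𝒳 ∪ {−}`
(`none` plays the role of the gap symbol `−`). -/
def labelAt {α : Type} (F : Forest α) (i : ℕ) : Option α := (treeAt F i).map PTree.label

/-- The number of nodes of the `i`-th subtree `x̄_i`. -/
def sizeAt {α : Type} (F : Forest α) (i : ℕ) : ℕ := ((treeAt F i).map PTree.size).getD 0

/-- A cost function over `α`: a real-valued function on `(𝒳 ∪ {−}) × (𝒳 ∪ {−})`,
where the gap symbol `−` is modelled by `none`. -/
abbrev Cost (α : Type) := Option α → Option α → ℝ

/-- `c` is non-negative. -/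
def Nonneg {α : Type} (c : Cost α) : Prop := ∀ x y, 0 ≤ c x y
/-- `c` is self-equal. -/
def SelfEq {α : Type} (c : Cost α) : Prop := ∀ x, c x x = 0
/-- `c` is discernible. -/
def Discernible {α : Type} (c : Cost α) : Prop := ∀ x y, x ≠ y → 0 < c x y
/-- `c` is symmetric. -/
def Symm {α : Type} (c : Cost α) : Prop := ∀ x y, c x y = c y x
/-- `c` conforms to the triangular inequality. -/
def Triangle {α : Type} (c : Cost α) : Prop := ∀ x y z, c x z ≤ c x y + c y z

/-- Deletion of the first root: its children are spliced into its place. -/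
def delRoot {α : Type} : Forest α → Forest α
  | [] => []
  | PTree.node _ cs :: ts => cs ++ ts

/-- Replacement of the label of the first root by `y`. -/
def repRoot {α : Type} (y : α) : Forest α → Forest α
  | [] => []
  | PTree.node _ cs :: ts => PTree.node y cs :: ts

/-- Insertion of a new root labeled `y` at root level, adopting the trees
`l` to `r-1` of the forest as its children. -/
def insRoot {α : Type} (y : α) (l r : ℕ) (F : Forest α) : Forest α :=
  if r > F.length + 1 ∨ l > r ∨ l < 1 then F
  else if l = r then F.take (l - 1) ++ [PTree.node y []] ++ F.drop (l - 1)
  else F.take (l - 1) ++ [PTree.node y ((F.drop (l - 1)).take (r - l))] ++ F.drop (r - 1)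

/-- `del_i`: deletion of the node with pre-order index `i`. -/
def applyDel {α : Type} : ℕ → Forest α → Forest α
  | _, [] => []
  | i, PTree.node a cs :: ts =>
    if i < 1 then PTree.node a cs :: ts
    else if i = 1 then delRoot (PTree.node a cs :: ts)
    else if i ≤ size (PTree.node a cs) then PTree.node a (applyDel (i - 1) cs) :: ts
    else PTree.node a cs :: applyDel (i - size (PTree.node a cs)) ts
  termination_by _ F => sizeOf F

/-- `rep_{i,y}`: replacement of the label of the node with pre-order index `i` by `y`. -/
def applyRep {α : Type} (y : α) : ℕ → Forest α → Forest α
  | _, [] => []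
  | i, PTree.node a cs :: ts =>
    if i < 1 then PTree.node a cs :: ts
    else if i = 1 then repRoot y (PTree.node a cs :: ts)
    else if i ≤ size (PTree.node a cs) then PTree.node a (applyRep y (i - 1) cs) :: ts
    else PTree.node a cs :: applyRep y (i - size (PTree.node a cs)) ts
  termination_by _ F => sizeOf F

/-- `ins_{i,y,l,r}`: insertion of a node labeled `y` as a child of the node with
pre-order index `i` (at root level if `i = 0`), adopting that node's children
`l` through `r-1` as its children. -/
def applyIns {α : Type} (y : α) (l r : ℕ) : ℕ → Forest α → Forest α
  | 0, F => insRoot y l r F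
  | _ + 1, [] => []
  | i + 1, PTree.node a cs :: ts =>
    if i + 1 ≤ size (PTree.node a cs) then PTree.node a (applyIns y l r i cs) :: ts
    else PTree.node a cs :: applyIns y l r (i + 1 - size (PTree.node a cs)) ts
  termination_by _ F => sizeOf F

/-- The standard edits: deletions `del_i`, replacements `rep_{i,y}` and
insertions `ins_{i,y,l,r}`. -/
inductive Edit (α : Type) where
  | del (i : ℕ)
  | rep (i : ℕ) (y : α)
  | ins (i : ℕ) (y : α) (l r : ℕ)

/-- Application of a single edit to a forest. -/
def Edit.apply {α : Type} : Edit α → Forest α → Forest α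
  | .del i, F => applyDel i F
  | .rep i y, F => applyRep y i F
  | .ins i y l r, F => applyIns y l r i F

/-- Application of an edit script `δ̄ = δ₁,…,δ_T` to a forest (left to right). -/
def applyScript {α : Type} (δ : List (Edit α)) (F : Forest α) : Forest α :=
  δ.foldl (fun F e => e.apply F) F

/-- `x̄_k` is a (proper) ancestor of `x̄_i`, expressed via 1-indexed pre-order indices:
the descendants of `x̄_k` occupy exactly the pre-order indices `k+1, …, k + |x̄_k| - 1`. -/
def AncestorIdx {α : Type} (F : Forest α) (k i : ℕ) : Prop :=
  k < i ∧ i < k + sizeAt F k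

/-- A tree mapping between two forests: a set `M ⊆ {1,…,|F|} × {1,…,|G|}` such that
for all `(i,j), (i',j') ∈ M` we have `i = i' ↔ j = j'`, `i ≤ i' ↔ j ≤ j'`, and
`x̄_i` is an ancestor of `x̄_{i'}` iff `ȳ_j` is an ancestor of `ȳ_{j'}`. -/
def IsTreeMapping {α : Type} (F G : Forest α) (M : Finset (ℕ × ℕ)) : Prop :=
  (∀ p ∈ M, 1 ≤ p.1 ∧ p.1 ≤ fsize F ∧ 1 ≤ p.2 ∧ p.2 ≤ fsize G) ∧
  (∀ p ∈ M, ∀ q ∈ M,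
    (p.1 = q.1 ↔ p.2 = q.2) ∧
    (p.1 ≤ q.1 ↔ p.2 ≤ q.2) ∧
    (AncestorIdx F p.1 q.1 ↔ AncestorIdx G p.2 q.2))

/-- The cost `c(M, X, Y)` of a tree mapping: the sum of the replacement costs of
the mapped pairs, the deletion costs of the unmapped nodes of `X`, and the
insertion costs of the unmapped nodes of `Y`. -/
noncomputable def mapCost {α : Type} (c : Cost α) (F G : Forest α) (M : Finset (ℕ × ℕ)) : ℝ :=
  (∑ p ∈ M, c (labelAt F p.1) (labelAt G p.2))
  + (∑ i ∈ (Finset.Icc 1 (fsize F)).filter (fun i => ∀ p ∈ M, p.1 ≠ i), c (labelAt F i) none)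
  + (∑ j ∈ (Finset.Icc 1 (fsize G)).filter (fun j => ∀ p ∈ M, p.2 ≠ j), c none (labelAt G j))

/-- A co-optimal tree mapping: a tree mapping of minimum cost. -/
def IsCoOptimal {α : Type} (c : Cost α) (F G : Forest α) (M : Finset (ℕ × ℕ)) : Prop :=
  IsTreeMapping F G M ∧
  ∀ M' : Finset (ℕ × ℕ), IsTreeMapping F G M' → mapCost c F G M ≤ mapCost c F G M'

variable {α : Type}

@[simp] lemma subtreesT_node (a : α) (cs : Forest α) :
    subtreesT (PTree.node a cs) = PTree.node a cs :: subtreesL cs := by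
  rw [subtreesT]

@[simp] lemma subtreesL_nil : subtreesL ([] : Forest α) = [] := by rw [subtreesL]

@[simp] lemma subtreesL_cons (t : PTree α) (ts : Forest α) :
    subtreesL (t :: ts) = subtreesT t ++ subtreesL ts := by rw [subtreesL]

lemma preorder_cons (a : α) (cs ts : Forest α) :
    preorder (PTree.node a cs :: ts) = PTree.node a cs :: (preorder cs ++ preorder ts) := by
  simp [preorder]

@[simp] lemma fsize_nil : fsize ([] : Forest α) = 0 := rfl

mutual
theorem size_eq_len (t : PTree α) : size t = (subtreesT t).length := by
  match t with
  | PTree.node a cs =>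
    rw [size, subtreesT]
    simp [sizeL_eq_len cs, fsize, preorder, Nat.add_comm]

theorem sizeL_eq_len (F : Forest α) : sizeL F = fsize F := by
  match F with
  | [] => rfl
  | t :: ts =>
    rw [sizeL]
    simp [fsize, preorder, size_eq_len t, sizeL_eq_len ts]
end

lemma fsize_cons (a : α) (cs ts : Forest α) :
    fsize (PTree.node a cs :: ts) = 1 + fsize cs + fsize ts := by
  simp [fsize, preorder_cons]; omega

lemma size_node (a : α) (cs : Forest α) : size (PTree.node a cs) = 1 + fsize cs := by
  rw [size, sizeL_eq_len]

lemma fsize_pos (a : α) (cs ts : Forest α) : 1 ≤ fsize (PTree.node a cs :: ts) := by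
  rw [fsize_cons]; omega

lemma eq_nil_of_fsize (F : Forest α) (h : fsize F = 0) : F = [] := by
  match F with
  | [] => rfl
  | PTree.node a cs :: ts => rw [fsize_cons] at h; omega

/- treeAt lemmas -/
lemma treeAt_one (a : α) (cs ts : Forest α) :
    treeAt (PTree.node a cs :: ts) 1 = some (PTree.node a cs) := by
  simp [treeAt, preorder_cons]

lemma treeAt_cons_eq (a : α) (cs ts : Forest α) (k : ℕ) (hk : 1 ≤ k) :
    treeAt (PTree.node a cs :: ts) k =
      if k = 1 then some (PTree.node a cs)
      else if k ≤ 1 + fsize cs then treeAt cs (k - 1)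
      else treeAt ts (k - 1 - fsize cs) := by
  have hlen : (preorder cs).length = fsize cs := rfl
  obtain ⟨n, rfl⟩ : ∃ n, k = n + 1 := ⟨k - 1, by omega⟩
  match n with
  | 0 => simp [treeAt, preorder_cons]
  | Nat.succ m =>
    simp only [treeAt, preorder_cons, Nat.succ_sub_one]
    rw [List.getElem?_cons_succ]
    by_cases hm : m < fsize cs
    · rw [List.getElem?_append_left (show m < (preorder cs).length from hm),
        if_neg (by omega), if_pos (by omega)]
    · rw [List.getElem?_append_right (show (preorder cs).length ≤ m from by rw [hlen]; omega),
        if_neg (by omega), if_neg (by omega), hlen]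
      congr 1
      omega

lemma treeAt_left (a : α) (cs ts : Forest α) (k : ℕ) (h2 : 2 ≤ k) (h : k ≤ 1 + fsize cs) :
    treeAt (PTree.node a cs :: ts) k = treeAt cs (k - 1) := by
  rw [treeAt_cons_eq a cs ts k (by omega), if_neg (by omega), if_pos h]

lemma treeAt_right (a : α) (cs ts : Forest α) (k : ℕ) (h : 2 + fsize cs ≤ k) :
    treeAt (PTree.node a cs :: ts) k = treeAt ts (k - 1 - fsize cs) := by
  rw [treeAt_cons_eq a cs ts k (by omega), if_neg (by omega), if_neg (by omega)]

lemma treeAt_oob (F : Forest α) (k : ℕ) (h : fsize F < k) : treeAt F k = none := by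
  apply List.getElem?_eq_none
  show fsize F ≤ k - 1
  omega

lemma treeAt_isSome (F : Forest α) (k : ℕ) (h1 : 1 ≤ k) (h2 : k ≤ fsize F) :
    ∃ t, treeAt F k = some t := by
  have : k - 1 < (preorder F).length := by show k - 1 < fsize F; omega
  exact ⟨(preorder F)[k-1], List.getElem?_eq_getElem this⟩

/- labelAt / sizeAt lemmas -/
lemma labelAt_one (a : α) (cs ts : Forest α) :
    labelAt (PTree.node a cs :: ts) 1 = some a := by
  simp [labelAt, treeAt_one, label]

lemma sizeAt_one (a : α) (cs ts : Forest α) :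
    sizeAt (PTree.node a cs :: ts) 1 = 1 + fsize cs := by
  simp [sizeAt, treeAt_one, size_node]

lemma labelAt_left (a : α) (cs ts : Forest α) (k : ℕ) (h2 : 2 ≤ k) (h : k ≤ 1 + fsize cs) :
    labelAt (PTree.node a cs :: ts) k = labelAt cs (k - 1) := by
  simp [labelAt, treeAt_left a cs ts k h2 h]

lemma sizeAt_left (a : α) (cs ts : Forest α) (k : ℕ) (h2 : 2 ≤ k) (h : k ≤ 1 + fsize cs) :
    sizeAt (PTree.node a cs :: ts) k = sizeAt cs (k - 1) := by
  simp [sizeAt, treeAt_left a cs ts k h2 h]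

lemma labelAt_right (a : α) (cs ts : Forest α) (k : ℕ) (h : 2 + fsize cs ≤ k) :
    labelAt (PTree.node a cs :: ts) k = labelAt ts (k - 1 - fsize cs) := by
  simp [labelAt, treeAt_right a cs ts k h]

lemma sizeAt_right (a : α) (cs ts : Forest α) (k : ℕ) (h : 2 + fsize cs ≤ k) :
    sizeAt (PTree.node a cs :: ts) k = sizeAt ts (k - 1 - fsize cs) := by
  simp [sizeAt, treeAt_right a cs ts k h]

lemma labelAt_oob (F : Forest α) (k : ℕ) (h : fsize F < k) : labelAt F k = none := by
  simp [labelAt, treeAt_oob F k h]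

lemma sizeAt_oob (F : Forest α) (k : ℕ) (h : fsize F < k) : sizeAt F k = 0 := by
  simp [sizeAt, treeAt_oob F k h]

lemma labelAt_isSome (F : Forest α) (k : ℕ) (h1 : 1 ≤ k) (h2 : k ≤ fsize F) :
    ∃ y, labelAt F k = some y := by
  obtain ⟨t, ht⟩ := treeAt_isSome F k h1 h2
  exact ⟨t.label, by simp [labelAt, ht]⟩
theorem sizeAt_bounds : ∀ (F : Forest α) (k : ℕ), 1 ≤ k → k ≤ fsize F →
    1 ≤ sizeAt F k ∧ k + sizeAt F k ≤ fsize F + 1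
  | [], k, h1, h2 => by simp at h2; omega
  | PTree.node a cs :: ts, k, h1, h2 => by
    rw [fsize_cons] at h2 ⊢
    rcases Nat.lt_or_ge k 2 with hk | hk
    · have : k = 1 := by omega
      subst this
      rw [sizeAt_one]
      omega
    · by_cases hcs : k ≤ 1 + fsize cs
      · rw [sizeAt_left a cs ts k hk hcs]
        have := sizeAt_bounds cs (k-1) (by omega) (by omega)
        omega
      · rw [sizeAt_right a cs ts k (by omega)]
        have := sizeAt_bounds ts (k-1-fsize cs) (by omega) (by omega)
        omega
  termination_by F => sizeOf F
  decreasing_by all_goals (try simp) <;> omega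

theorem forest_ext : ∀ (F G : Forest α), fsize F = fsize G →
    (∀ k, 1 ≤ k → labelAt F k = labelAt G k) →
    (∀ k, 1 ≤ k → sizeAt F k = sizeAt G k) → F = G
  | [], G, h, _, _ => (eq_nil_of_fsize G h.symm).symm
  | PTree.node a cs :: ts, [], h, _, _ => by
    rw [fsize_cons] at h; simp at h
  | PTree.node a cs :: ts, PTree.node b ds :: us, h, hlab, hsz => by
    have hab : a = b := by
      have := hlab 1 le_rfl
      rw [labelAt_one, labelAt_one] at this
      exact Option.some_injective _ this
    have hcd : fsize cs = fsize ds := by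
      have := hsz 1 le_rfl
      rw [sizeAt_one, sizeAt_one] at this
      omega
    have htu : fsize ts = fsize us := by
      rw [fsize_cons, fsize_cons] at h
      omega
    have hcs : cs = ds := by
      apply forest_ext cs ds hcd
      · intro k hk
        by_cases hr : k ≤ fsize cs
        · have := hlab (k+1) (by omega)
          rw [labelAt_left a cs ts (k+1) (by omega) (by omega),
            labelAt_left b ds us (k+1) (by omega) (by omega)] at this
          simpa using this
        · rw [labelAt_oob cs k (by omega), labelAt_oob ds k (by omega)]
      · intro k hk
        by_cases hr : k ≤ fsize cs
        · have := hsz (k+1) (by omega)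
          rw [sizeAt_left a cs ts (k+1) (by omega) (by omega),
            sizeAt_left b ds us (k+1) (by omega) (by omega)] at this
          simpa using this
        · rw [sizeAt_oob cs k (by omega), sizeAt_oob ds k (by omega)]
    have hts : ts = us := by
      apply forest_ext ts us htu
      · intro k hk
        have := hlab (k + 1 + fsize cs) (by omega)
        rw [labelAt_right a cs ts (k + 1 + fsize cs) (by omega),
          labelAt_right b ds us (k + 1 + fsize cs) (by rw [← hcd]; omega)] at this
        have e : k + 1 + fsize cs - 1 - fsize cs = k := by omega
        rw [e] at this
        rw [← hcd] at this
        rw [e] at this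
        exact this
      · intro k hk
        have := hsz (k + 1 + fsize cs) (by omega)
        rw [sizeAt_right a cs ts (k + 1 + fsize cs) (by omega),
          sizeAt_right b ds us (k + 1 + fsize cs) (by rw [← hcd]; omega)] at this
        have e : k + 1 + fsize cs - 1 - fsize cs = k := by omega
        rw [e] at this
        rw [← hcd] at this
        rw [e] at this
        exact this
    rw [hab, hcs, hts]
  termination_by F _ => sizeOf F
  decreasing_by all_goals (try simp) <;> omega
lemma applyRep_nil (y : α) (i : ℕ) : applyRep y i [] = [] := by rw [applyRep]

lemma applyRep_cons (y : α) (i : ℕ) (a : α) (cs ts : Forest α) :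
    applyRep y i (PTree.node a cs :: ts) =
      if i < 1 then PTree.node a cs :: ts
      else if i = 1 then PTree.node y cs :: ts
      else if i ≤ 1 + fsize cs then PTree.node a (applyRep y (i-1) cs) :: ts
      else PTree.node a cs :: applyRep y (i - (1 + fsize cs)) ts := by
  rw [applyRep]
  simp [repRoot, size_node]

theorem rep_spec : ∀ (F : Forest α) (i : ℕ) (y : α),
    fsize (applyRep y i F) = fsize F ∧
    (∀ k, 1 ≤ k → sizeAt (applyRep y i F) k = sizeAt F k) ∧
    (∀ k, 1 ≤ k → k ≠ i → labelAt (applyRep y i F) k = labelAt F k) ∧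
    (1 ≤ i → i ≤ fsize F → labelAt (applyRep y i F) i = some y)
  | [], i, y => by
    rw [applyRep_nil]
    exact ⟨rfl, fun _ _ => rfl, fun _ _ _ => rfl, by simp; omega⟩
  | PTree.node a cs :: ts, i, y => by
    rw [applyRep_cons]
    by_cases h0 : i < 1
    · rw [if_pos h0]
      exact ⟨rfl, fun _ _ => rfl, fun _ _ _ => rfl, by omega⟩
    rw [if_neg h0]
    by_cases h1 : i = 1
    · subst h1
      rw [if_pos rfl]
      refine ⟨by rw [fsize_cons, fsize_cons], ?_, ?_, ?_⟩
      · intro k hk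
        rcases Nat.lt_or_ge k 2 with h | h
        · have : k = 1 := by omega
          subst this; rw [sizeAt_one, sizeAt_one]
        by_cases hl : k ≤ 1 + fsize cs
        · rw [sizeAt_left y cs ts k h hl, sizeAt_left a cs ts k h hl]
        · rw [sizeAt_right y cs ts k (by omega), sizeAt_right a cs ts k (by omega)]
      · intro k hk hki
        have h : 2 ≤ k := by omega
        by_cases hl : k ≤ 1 + fsize cs
        · rw [labelAt_left y cs ts k h hl, labelAt_left a cs ts k h hl]
        · rw [labelAt_right y cs ts k (by omega), labelAt_right a cs ts k (by omega)]
      · intro _ _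
        rw [labelAt_one]
    rw [if_neg h1]
    have h2 : 2 ≤ i := by omega
    by_cases hc : i ≤ 1 + fsize cs
    · rw [if_pos hc]
      obtain ⟨ihf, ihs, ihl, ihy⟩ := rep_spec cs (i-1) y
      refine ⟨by rw [fsize_cons, fsize_cons, ihf], ?_, ?_, ?_⟩
      · intro k hk
        rcases Nat.lt_or_ge k 2 with h | h
        · have : k = 1 := by omega
          subst this; rw [sizeAt_one, sizeAt_one, ihf]
        by_cases hl : k ≤ 1 + fsize cs
        · rw [sizeAt_left a _ ts k h (by rw [ihf]; omega), sizeAt_left a cs ts k h hl]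
          exact ihs (k-1) (by omega)
        · rw [sizeAt_right a _ ts k (by rw [ihf]; omega), sizeAt_right a cs ts k (by omega), ihf]
      · intro k hk hki
        rcases Nat.lt_or_ge k 2 with h | h
        · have : k = 1 := by omega
          subst this; rw [labelAt_one, labelAt_one]
        by_cases hl : k ≤ 1 + fsize cs
        · rw [labelAt_left a _ ts k h (by rw [ihf]; omega), labelAt_left a cs ts k h hl]
          exact ihl (k-1) (by omega) (by omega)
        · rw [labelAt_right a _ ts k (by rw [ihf]; omega), labelAt_right a cs ts k (by omega), ihf]
      · intro _ _
        rw [labelAt_left a _ ts i h2 (by rw [ihf]; omega)]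
        exact ihy (by omega) (by omega)
    · rw [if_neg hc]
      obtain ⟨ihf, ihs, ihl, ihy⟩ := rep_spec ts (i - (1 + fsize cs)) y
      refine ⟨by rw [fsize_cons, fsize_cons, ihf], ?_, ?_, ?_⟩
      · intro k hk
        rcases Nat.lt_or_ge k 2 with h | h
        · have : k = 1 := by omega
          subst this; rw [sizeAt_one, sizeAt_one]
        by_cases hl : k ≤ 1 + fsize cs
        · rw [sizeAt_left a cs _ k h hl, sizeAt_left a cs ts k h hl]
        · rw [sizeAt_right a cs _ k (by omega), sizeAt_right a cs ts k (by omega)]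
          exact ihs (k - 1 - fsize cs) (by omega)
      · intro k hk hki
        rcases Nat.lt_or_ge k 2 with h | h
        · have : k = 1 := by omega
          subst this; rw [labelAt_one, labelAt_one]
        by_cases hl : k ≤ 1 + fsize cs
        · rw [labelAt_left a cs _ k h hl, labelAt_left a cs ts k h hl]
        · rw [labelAt_right a cs _ k (by omega), labelAt_right a cs ts k (by omega)]
          exact ihl (k - 1 - fsize cs) (by omega) (by omega)
      · intro _ hif
        rw [fsize_cons] at hif
        rw [labelAt_right a cs _ i (by omega)]
        have e : i - 1 - fsize cs = i - (1 + fsize cs) := by omega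
        rw [e]
        exact ihy (by omega) (by omega)
  termination_by F _ _ => sizeOf F
  decreasing_by all_goals (try simp) <;> omega
lemma subtreesL_append : ∀ (A B : Forest α), subtreesL (A ++ B) = subtreesL A ++ subtreesL B
  | [], B => by simp
  | t :: ts, B => by simp [subtreesL_append ts B]

lemma preorder_append (A B : Forest α) : preorder (A ++ B) = preorder A ++ preorder B :=
  subtreesL_append A B

lemma fsize_append (A B : Forest α) : fsize (A ++ B) = fsize A + fsize B := by
  simp [fsize, preorder_append]

lemma treeAt_splice (a : α) (cs ts : Forest α) (k : ℕ) (hk : 1 ≤ k) :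
    treeAt (cs ++ ts) k = treeAt (PTree.node a cs :: ts) (k + 1) := by
  obtain ⟨m, rfl⟩ : ∃ m, k = m + 1 := ⟨k - 1, by omega⟩
  simp only [treeAt, preorder_cons, preorder_append, Nat.add_sub_cancel]
  rw [List.getElem?_cons_succ]

lemma applyDel_nil (i : ℕ) : applyDel i ([] : Forest α) = [] := by rw [applyDel]

lemma applyDel_cons (i : ℕ) (a : α) (cs ts : Forest α) :
    applyDel i (PTree.node a cs :: ts) =
      if i < 1 then PTree.node a cs :: ts
      else if i = 1 then cs ++ ts
      else if i ≤ 1 + fsize cs then PTree.node a (applyDel (i-1) cs) :: ts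
      else PTree.node a cs :: applyDel (i - (1 + fsize cs)) ts := by
  rw [applyDel]
  simp [delRoot, size_node]

theorem del_spec : ∀ (F : Forest α) (i : ℕ), 1 ≤ i → i ≤ fsize F →
    fsize (applyDel i F) = fsize F - 1 ∧
    (∀ k, 1 ≤ k → k < i → labelAt (applyDel i F) k = labelAt F k) ∧
    (∀ k, 1 ≤ k → k < i → sizeAt (applyDel i F) k =
        (if i < k + sizeAt F k then sizeAt F k - 1 else sizeAt F k)) ∧
    (∀ k, i ≤ k → labelAt (applyDel i F) k = labelAt F (k+1) ∧
        sizeAt (applyDel i F) k = sizeAt F (k+1))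
  | [], i, h1, h2 => by simp at h2; omega
  | PTree.node a cs :: ts, i, h1, h2 => by
    rw [fsize_cons] at h2
    rw [applyDel_cons, if_neg (by omega)]
    by_cases hone : i = 1
    · subst hone
      rw [if_pos rfl]
      refine ⟨by rw [fsize_append, fsize_cons]; omega, by omega, by omega, ?_⟩
      intro k hk
      have ht := treeAt_splice a cs ts k (by omega)
      constructor
      · simp [labelAt, ht]
      · simp [sizeAt, ht]
    rw [if_neg hone]
    have h2i : 2 ≤ i := by omega
    by_cases hc : i ≤ 1 + fsize cs
    · rw [if_pos hc]
      obtain ⟨ihf, ihl, ihs, ihr⟩ := del_spec cs (i-1) (by omega) (by omega)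
      have hcs1 : 1 ≤ fsize cs := by omega
      refine ⟨by rw [fsize_cons, fsize_cons, ihf]; omega, ?_, ?_, ?_⟩
      · intro k hk hki
        rcases Nat.lt_or_ge k 2 with h | h
        · have : k = 1 := by omega
          subst this; rw [labelAt_one, labelAt_one]
        · rw [labelAt_left a _ ts k h (by rw [ihf]; omega),
            labelAt_left a cs ts k h (by omega)]
          exact ihl (k-1) (by omega) (by omega)
      · intro k hk hki
        rcases Nat.lt_or_ge k 2 with h | h
        · have : k = 1 := by omega
          subst this
          rw [sizeAt_one, sizeAt_one, ihf, if_pos (by omega)]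
          omega
        · rw [sizeAt_left a _ ts k h (by rw [ihf]; omega),
            sizeAt_left a cs ts k h (by omega)]
          have := ihs (k-1) (by omega) (by omega)
          by_cases hA : i < k + sizeAt cs (k-1)
          · rw [if_pos hA]
            rw [this, if_pos (by omega)]
          · rw [if_neg hA]
            rw [this, if_neg (by omega)]
      · intro k hki
        have hk2 : 2 ≤ k := by omega
        by_cases hl : k ≤ fsize cs
        · have e : k - 1 + 1 = k := by omega
          have h4 := ihr (k-1) (by omega)
          rw [e] at h4
          constructor
          · rw [labelAt_left a _ ts k hk2 (by rw [ihf]; omega),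
              labelAt_left a cs ts (k+1) (by omega) (by omega)]
            have e2 : k + 1 - 1 = k := by omega
            rw [e2]
            exact h4.1
          · rw [sizeAt_left a _ ts k hk2 (by rw [ihf]; omega),
              sizeAt_left a cs ts (k+1) (by omega) (by omega)]
            have e2 : k + 1 - 1 = k := by omega
            rw [e2]
            exact h4.2
        · have e : k - 1 - fsize (applyDel (i-1) cs) = k - fsize cs := by rw [ihf]; omega
          have e2 : k + 1 - 1 - fsize cs = k - fsize cs := by omega
          constructor
          · rw [labelAt_right a _ ts k (by rw [ihf]; omega),
              labelAt_right a cs ts (k+1) (by omega), e, e2]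
          · rw [sizeAt_right a _ ts k (by rw [ihf]; omega),
              sizeAt_right a cs ts (k+1) (by omega), e, e2]
    · rw [if_neg hc]
      obtain ⟨ihf, ihl, ihs, ihr⟩ := del_spec ts (i - (1 + fsize cs)) (by omega) (by omega)
      refine ⟨by rw [fsize_cons, fsize_cons, ihf]; omega, ?_, ?_, ?_⟩
      · intro k hk hki
        rcases Nat.lt_or_ge k 2 with h | h
        · have : k = 1 := by omega
          subst this; rw [labelAt_one, labelAt_one]
        by_cases hl : k ≤ 1 + fsize cs
        · rw [labelAt_left a cs _ k h hl, labelAt_left a cs ts k h hl]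
        · rw [labelAt_right a cs _ k (by omega), labelAt_right a cs ts k (by omega)]
          exact ihl (k - 1 - fsize cs) (by omega) (by omega)
      · intro k hk hki
        rcases Nat.lt_or_ge k 2 with h | h
        · have : k = 1 := by omega
          subst this
          rw [sizeAt_one, sizeAt_one, if_neg (by omega)]
        by_cases hl : k ≤ 1 + fsize cs
        · rw [sizeAt_left a cs _ k h hl, sizeAt_left a cs ts k h hl]
          have hb := sizeAt_bounds cs (k-1) (by omega) (by omega)
          rw [if_neg (by omega)]
        · rw [sizeAt_right a cs _ k (by omega), sizeAt_right a cs ts k (by omega)]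
          have := ihs (k - 1 - fsize cs) (by omega) (by omega)
          by_cases hA : i < k + sizeAt ts (k - 1 - fsize cs)
          · rw [if_pos hA, this, if_pos (by omega)]
          · rw [if_neg hA, this, if_neg (by omega)]
      · intro k hki
        have hk2 : 2 + fsize cs ≤ k := by omega
        have h4 := ihr (k - 1 - fsize cs) (by omega)
        have e : k - 1 - fsize cs + 1 = k - fsize cs := by omega
        have e2 : k + 1 - 1 - fsize cs = k - fsize cs := by omega
        rw [e] at h4
        constructor
        · rw [labelAt_right a cs _ k hk2, labelAt_right a cs ts (k+1) (by omega), e2]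
          exact h4.1
        · rw [sizeAt_right a cs _ k hk2, sizeAt_right a cs ts (k+1) (by omega), e2]
          exact h4.2
  termination_by F _ => sizeOf F
  decreasing_by all_goals (try simp) <;> omega
lemma applyIns_zero (y : α) (l r : ℕ) (F : Forest α) :
    applyIns y l r 0 F = insRoot y l r F := by rw [applyIns]

lemma applyIns_cons (y : α) (l r i : ℕ) (a : α) (cs ts : Forest α) :
    applyIns y l r (i+1) (PTree.node a cs :: ts) =
      if i + 1 ≤ 1 + fsize cs then PTree.node a (applyIns y l r i cs) :: ts
      else PTree.node a cs :: applyIns y l r (i + 1 - (1 + fsize cs)) ts := by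
  rw [applyIns]
  simp [size_node]

lemma insRoot_eq (y : α) (F : Forest α) (l : ℕ) (hl : 1 ≤ l) (hle : l ≤ F.length + 1) :
    insRoot y l l F = F.take (l-1) ++ [PTree.node y []] ++ F.drop (l-1) := by
  unfold insRoot
  rw [if_neg (by omega), if_pos rfl]

lemma insRoot_lt (y : α) (F : Forest α) (l r : ℕ) (hl : 1 ≤ l) (hlt : l < r)
    (hr : r ≤ F.length + 1) :
    insRoot y l r F
      = F.take (l-1) ++ [PTree.node y ((F.drop (l-1)).take (r-l))] ++ F.drop (r-1) := by
  unfold insRoot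
  rw [if_neg (by omega), if_neg (by omega)]

lemma insRoot_cons (y : α) (t : PTree α) (W : Forest α) (l r : ℕ)
    (hl : 1 ≤ l) (hlr : l ≤ r) (hr : r ≤ W.length + 1) :
    insRoot y (l+1) (r+1) (t :: W) = t :: insRoot y l r W := by
  obtain ⟨l0, rfl⟩ : ∃ l0, l = l0 + 1 := ⟨l - 1, by omega⟩
  rcases Nat.lt_or_ge l0.succ r with hlt | hge
  · obtain ⟨r0, rfl⟩ : ∃ r0, r = r0 + 1 := ⟨r - 1, by omega⟩
    rw [insRoot_lt y _ _ _ (by omega) (by omega) (by simp; omega),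
      insRoot_lt y _ _ _ (by omega) (by omega) (by omega)]
    have e1 : l0 + 1 + 1 - 1 = l0 + 1 := by omega
    have e2 : r0 + 1 + 1 - 1 = r0 + 1 := by omega
    have e3 : r0 + 1 + 1 - (l0 + 1 + 1) = r0 + 1 - (l0 + 1) := by omega
    rw [e1, e2, e3]
    simp [List.take_succ_cons, List.drop_succ_cons]
  · have he : l0 + 1 = r := by omega
    subst he
    rw [insRoot_eq y _ _ (by omega) (by simp; omega),
      insRoot_eq y _ _ (by omega) (by omega)]
    have e1 : l0 + 1 + 1 - 1 = l0 + 1 := by omega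
    rw [e1]
    simp [List.take_succ_cons, List.drop_succ_cons]

lemma insRoot_build (y : α) (cs ts : Forest α) :
    insRoot y 1 (cs.length + 1) (cs ++ ts) = PTree.node y cs :: ts := by
  match cs with
  | [] =>
    simp only [List.length_nil, List.nil_append, Nat.zero_add]
    rw [insRoot_eq y ts 1 le_rfl (by omega)]
    simp
  | c :: cs' =>
    rw [insRoot_lt y _ 1 ((c :: cs').length + 1) (by omega) (by simp) (by simp only [List.length_append, List.length_cons]; omega)]
    have e0 : (1 : ℕ) - 1 = 0 := rfl
    have e1 : (c :: cs').length + 1 - 1 = (c :: cs').length := by omega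
    rw [e0, e1, List.take_zero, List.drop_zero, List.take_left, List.drop_left]
    simp

theorem ins_undo : ∀ (G : Forest α) (j : ℕ), 1 ≤ j → j ≤ fsize G → ∀ y, labelAt G j = some y →
    ∃ i l r, applyIns y l r i (applyDel j G) = G ∧ i + 1 ≤ fsize G ∧ 1 ≤ l ∧ l ≤ r ∧
      (i = 0 → r ≤ (applyDel j G).length + 1)
  | [], j, h1, h2, y, hy => by simp at h2; omega
  | PTree.node a cs :: ts, j, h1, h2, y, hy => by
    rw [fsize_cons] at h2
    by_cases hone : j = 1
    · subst hone
      rw [labelAt_one] at hy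
      have hy : y = a := (Option.some_injective _ hy).symm
      subst hy
      have hdel : applyDel 1 (PTree.node y cs :: ts) = cs ++ ts := by
        rw [applyDel_cons, if_neg (by omega), if_pos rfl]
      refine ⟨0, 1, cs.length + 1, ?_, by rw [fsize_cons]; omega, le_rfl, by omega,
        fun _ => by rw [hdel]; simp⟩
      rw [hdel, applyIns_zero, insRoot_build]
    · have h2j : 2 ≤ j := by omega
      by_cases hc : j ≤ 1 + fsize cs
      · have hdel : applyDel j (PTree.node a cs :: ts)
            = PTree.node a (applyDel (j-1) cs) :: ts := by
          rw [applyDel_cons, if_neg (by omega), if_neg hone, if_pos hc]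
        have hy' : labelAt cs (j-1) = some y := by
          rw [labelAt_left a cs ts j h2j hc] at hy; exact hy
        obtain ⟨i, l, r, hEq, hB, hL, hLR, _⟩ := ins_undo cs (j-1) (by omega) (by omega) y hy'
        have ihf := (del_spec cs (j-1) (by omega) (by omega)).1
        refine ⟨i + 1, l, r, ?_, by rw [fsize_cons]; omega, hL, hLR, by omega⟩
        rw [hdel, applyIns_cons, if_pos (by rw [ihf]; omega), hEq]
      · have hdel : applyDel j (PTree.node a cs :: ts)
            = PTree.node a cs :: applyDel (j - (1 + fsize cs)) ts := by
          rw [applyDel_cons, if_neg (by omega), if_neg hone, if_neg hc]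
        have hy' : labelAt ts (j - (1 + fsize cs)) = some y := by
          rw [labelAt_right a cs ts j (by omega)] at hy
          have e : j - 1 - fsize cs = j - (1 + fsize cs) := by omega
          rw [e] at hy; exact hy
        obtain ⟨i, l, r, hEq, hB, hL, hLR, hR0⟩ :=
          ins_undo ts (j - (1 + fsize cs)) (by omega) (by omega) y hy'
        match i with
        | 0 =>
          refine ⟨0, l + 1, r + 1, ?_, by rw [fsize_cons]; omega, by omega, by omega, ?_⟩
          · rw [hdel, applyIns_zero, insRoot_cons y _ _ l r hL hLR (hR0 rfl)]
            rw [← applyIns_zero y l r, hEq]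
          · intro _
            rw [hdel]
            have := hR0 rfl
            simp only [List.length_cons]
            omega
        | Nat.succ i0 =>
          refine ⟨i0 + 1 + (1 + fsize cs), l, r, ?_,
            by rw [fsize_cons]; omega, hL, hLR, by omega⟩
          rw [hdel]
          have e : i0 + 1 + (1 + fsize cs) = (i0 + fsize cs + 1) + 1 := by omega
          rw [e, applyIns_cons, if_neg (by omega)]
          have e2 : i0 + fsize cs + 1 + 1 - (1 + fsize cs) = i0 + 1 := by omega
          rw [e2, hEq]
  termination_by G _ => sizeOf G
  decreasing_by all_goals (try simp) <;> omega
lemma applyScript_nil (F : Forest α) : applyScript [] F = F := rfl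

lemma applyScript_cons (e : Edit α) (δ : List (Edit α)) (F : Forest α) :
    applyScript (e :: δ) F = applyScript δ (e.apply F) := rfl

lemma applyScript_append (δ δ' : List (Edit α)) (F : Forest α) :
    applyScript (δ ++ δ') F = applyScript δ' (applyScript δ F) := by
  simp [applyScript, List.foldl_append]

theorem repScript_spec : ∀ (L : List (ℕ × α)) (F : Forest α),
    fsize (applyScript (L.map fun q => Edit.rep q.1 q.2) F) = fsize F ∧
    (∀ k, 1 ≤ k → sizeAt (applyScript (L.map fun q => Edit.rep q.1 q.2) F) k = sizeAt F k) ∧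
    (∀ k, 1 ≤ k → (∀ q ∈ L, q.1 ≠ k) →
      labelAt (applyScript (L.map fun q => Edit.rep q.1 q.2) F) k = labelAt F k) ∧
    (∀ q ∈ L, (∀ q' ∈ L, q'.1 = q.1 → q'.2 = q.2) → 1 ≤ q.1 → q.1 ≤ fsize F →
      labelAt (applyScript (L.map fun q => Edit.rep q.1 q.2) F) q.1 = some q.2)
  | [], F => ⟨rfl, fun _ _ => rfl, fun _ _ _ => rfl, fun q hq => absurd hq (by simp)⟩
  | q₀ :: L', F => by
    classical
    have hstep : applyScript ((q₀ :: L').map fun q => Edit.rep q.1 q.2) F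
        = applyScript (L'.map fun q => Edit.rep q.1 q.2) (applyRep q₀.2 q₀.1 F) := rfl
    obtain ⟨rf, rs, rl, ry⟩ := rep_spec F q₀.1 q₀.2
    obtain ⟨ihf, ihs, ihl, ihy⟩ := repScript_spec L' (applyRep q₀.2 q₀.1 F)
    rw [hstep]
    refine ⟨ihf.trans rf, fun k hk => (ihs k hk).trans (rs k hk), ?_, ?_⟩
    · intro k hk hun
      have h0 : ∀ q ∈ L', q.1 ≠ k := fun q hq => hun q (List.mem_cons_of_mem _ hq)
      rw [ihl k hk h0, rl k hk (Ne.symm (hun q₀ List.mem_cons_self))]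
    · intro q hq hcons h1 h2
      rcases List.mem_cons.mp hq with rfl | hq'
      · by_cases hmem : ∃ q' ∈ L', q'.1 = q.1
        · obtain ⟨q', hq'L, hq'1⟩ := hmem
          have hq'2 : q'.2 = q.2 := hcons q' (List.mem_cons_of_mem _ hq'L) hq'1
          have := ihy q' hq'L
            (fun q'' hq'' h => by
              have := hcons q'' (List.mem_cons_of_mem _ hq'') (h.trans hq'1)
              rw [this, hq'2])
            (by omega) (by rw [rf]; omega)
          rw [hq'1, hq'2] at this
          exact this
        · push_neg at hmem
          rw [ihl q.1 h1 (fun q' hq' => hmem q' hq')]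
          exact ry h1 h2
      · exact ihy q hq' (fun q' hq' h => hcons q' (List.mem_cons_of_mem _ hq') h) h1
          (by rw [rf]; omega)

lemma anc_del (F : Forest α) (i : ℕ) (h1 : 1 ≤ i) (h2 : i ≤ fsize F) (a b : ℕ)
    (ha1 : 1 ≤ a) (ha2 : a ≤ fsize F) (hai : a ≠ i) (hbi : b ≠ i) :
    (AncestorIdx (applyDel i F) (if a < i then a else a - 1) (if b < i then b else b - 1)
      ↔ AncestorIdx F a b) := by
  obtain ⟨hf, hl, hs, hr⟩ := del_spec F i h1 h2
  unfold AncestorIdx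
  by_cases ha : a < i
  · have hsa := hs a ha1 ha
    by_cases hb : b < i
    · rw [if_pos ha, if_pos hb, hsa]
      split_ifs with h <;> omega
    · rw [if_pos ha, if_neg hb, hsa]
      split_ifs with h <;> omega
  · have e : a - 1 + 1 = a := by omega
    have hsa := (hr (a-1) (by omega)).2
    rw [e] at hsa
    by_cases hb : b < i
    · rw [if_neg ha, if_pos hb, hsa]
      omega
    · rw [if_neg ha, if_neg hb, hsa]
      omega
lemma mapping_total_eq (F G : Forest α) (M : Finset (ℕ × ℕ)) (hM : IsTreeMapping F G M)
    (hlab : ∀ p ∈ M, labelAt F p.1 = labelAt G p.2)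
    (hsurj1 : ∀ i, 1 ≤ i → i ≤ fsize F → ∃ p ∈ M, p.1 = i)
    (hsurj2 : ∀ j, 1 ≤ j → j ≤ fsize G → ∃ p ∈ M, p.2 = j) : F = G := by
  classical
  obtain ⟨hbound, hrel⟩ := hM
  have hinj : ∀ q ∈ M, ∀ q' ∈ M, q.1 = q'.1 → q = q' := by
    intro q hq q' hq' h
    exact Prod.ext h (((hrel q hq q' hq').1).mp h)
  have hdiag : ∀ p ∈ M, p.1 = p.2 := by
    intro p hp
    have hAB : M.filter (fun q => q.1 ≤ p.1) = M.filter (fun q => q.2 ≤ p.2) := by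
      ext q
      simp only [Finset.mem_filter, and_congr_right_iff]
      intro hq
      exact (hrel q hq p hp).2.1
    have hAcard : (M.filter (fun q => q.1 ≤ p.1)).card = p.1 := by
      have himg : (M.filter (fun q => q.1 ≤ p.1)).image Prod.fst = Finset.Icc 1 p.1 := by
        ext i
        simp only [Finset.mem_image, Finset.mem_filter, Finset.mem_Icc]
        constructor
        · rintro ⟨q, ⟨hqM, hqle⟩, rfl⟩
          exact ⟨(hbound q hqM).1, hqle⟩
        · rintro ⟨h1i, h2i⟩
          obtain ⟨q, hqM, rfl⟩ := hsurj1 i h1i (le_trans h2i (hbound p hp).2.1)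
          exact ⟨q, ⟨hqM, h2i⟩, rfl⟩
      have hc := Finset.card_image_of_injOn
        (f := Prod.fst) (s := M.filter (fun q => q.1 ≤ p.1))
        (fun q hq q' hq' h => hinj q (Finset.mem_filter.mp hq).1 q'
          (Finset.mem_filter.mp hq').1 h)
      rw [himg, Nat.card_Icc] at hc
      omega
    have hBcard : (M.filter (fun q => q.2 ≤ p.2)).card = p.2 := by
      have himg : (M.filter (fun q => q.2 ≤ p.2)).image Prod.snd = Finset.Icc 1 p.2 := by
        ext j
        simp only [Finset.mem_image, Finset.mem_filter, Finset.mem_Icc]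
        constructor
        · rintro ⟨q, ⟨hqM, hqle⟩, rfl⟩
          exact ⟨(hbound q hqM).2.2.1, hqle⟩
        · rintro ⟨h1j, h2j⟩
          obtain ⟨q, hqM, rfl⟩ := hsurj2 j h1j (le_trans h2j (hbound p hp).2.2.2)
          exact ⟨q, ⟨hqM, h2j⟩, rfl⟩
      have hinj2 : ∀ q ∈ M, ∀ q' ∈ M, q.2 = q'.2 → q = q' := by
        intro q hq q' hq' h
        exact Prod.ext (((hrel q hq q' hq').1).mpr h) h
      have hc := Finset.card_image_of_injOn
        (f := Prod.snd) (s := M.filter (fun q => q.2 ≤ p.2))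
        (fun q hq q' hq' h => hinj2 q (Finset.mem_filter.mp hq).1 q'
          (Finset.mem_filter.mp hq').1 h)
      rw [himg, Nat.card_Icc] at hc
      omega
    rw [← hAcard, ← hBcard, hAB]
  have hid : ∀ k, 1 ≤ k → k ≤ fsize F → (k, k) ∈ M := by
    intro k hk1 hk2
    obtain ⟨p, hp, hp1⟩ := hsurj1 k hk1 hk2
    have h2 := hdiag p hp
    have : p = (k, k) := Prod.ext hp1 (by rw [← h2, hp1])
    rwa [this] at hp
  have hmn : fsize F = fsize G := by
    rcases Nat.eq_zero_or_pos (fsize F) with h0 | h0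
    · rcases Nat.eq_zero_or_pos (fsize G) with g0 | g0
      · omega
      · obtain ⟨p, hp, hp2⟩ := hsurj2 (fsize G) (by omega) le_rfl
        have := (hbound p hp).2.1
        have := hdiag p hp
        omega
    · obtain ⟨p, hp, hp1⟩ := hsurj1 (fsize F) (by omega) le_rfl
      have hb := (hbound p hp).2.2.2
      have hd := hdiag p hp
      rcases Nat.eq_zero_or_pos (fsize G) with g0 | g0
      · omega
      · obtain ⟨q, hq, hq2⟩ := hsurj2 (fsize G) (by omega) le_rfl
        have hb2 := (hbound q hq).2.1
        have hd2 := hdiag q hq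
        omega
  apply forest_ext F G hmn
  · intro k hk
    by_cases hr : k ≤ fsize F
    · exact hlab (k, k) (hid k hk hr)
    · rw [labelAt_oob F k (by omega), labelAt_oob G k (by omega)]
  · intro k hk
    by_cases hrange : k ≤ fsize F
    · have hAncIff : ∀ b, 1 ≤ b → b ≤ fsize F →
          (AncestorIdx F k b ↔ AncestorIdx G k b) := by
        intro b hb1 hb2
        exact (hrel (k,k) (hid k hk hrange) (b,b) (hid b hb1 hb2)).2.2
      have bF := sizeAt_bounds F k hk hrange
      have bG := sizeAt_bounds G k hk (by omega)
      rcases lt_trichotomy (sizeAt F k) (sizeAt G k) with h | h | h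
      · have hb := hAncIff (k + sizeAt F k) (by omega) (by omega)
        unfold AncestorIdx at hb
        omega
      · exact h
      · have hb := hAncIff (k + sizeAt G k) (by omega) (by omega)
        unfold AncestorIdx at hb
        omega
    · rw [sizeAt_oob F k (by omega), sizeAt_oob G k (by omega)]
def adjIdx (i a : ℕ) : ℕ := if a < i then a else a - 1

lemma adjIdx_eq_iff (i a b : ℕ) (ha : 1 ≤ a) (hb : 1 ≤ b) (hai : a ≠ i) (hbi : b ≠ i) :
    adjIdx i a = adjIdx i b ↔ a = b := by
  unfold adjIdx; split_ifs <;> omega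

lemma adjIdx_le_iff (i a b : ℕ) (ha : 1 ≤ a) (hb : 1 ≤ b) (hai : a ≠ i) (hbi : b ≠ i) :
    adjIdx i a ≤ adjIdx i b ↔ a ≤ b := by
  unfold adjIdx; split_ifs <;> omega

lemma anc_del' (F : Forest α) (i : ℕ) (h1 : 1 ≤ i) (h2 : i ≤ fsize F) (a b : ℕ)
    (ha1 : 1 ≤ a) (ha2 : a ≤ fsize F) (hai : a ≠ i) (hbi : b ≠ i) :
    (AncestorIdx (applyDel i F) (adjIdx i a) (adjIdx i b) ↔ AncestorIdx F a b) :=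
  anc_del F i h1 h2 a b ha1 ha2 hai hbi

lemma del_label_adj (F : Forest α) (i : ℕ) (h1 : 1 ≤ i) (h2 : i ≤ fsize F) (a : ℕ)
    (ha1 : 1 ≤ a) (hai : a ≠ i) :
    labelAt (applyDel i F) (adjIdx i a) = labelAt F a := by
  obtain ⟨hf, hl, hs, hr⟩ := del_spec F i h1 h2
  unfold adjIdx
  split_ifs with h
  · exact hl a ha1 h
  · have e : a - 1 + 1 = a := by omega
    have := (hr (a-1) (by omega)).1
    rwa [e] at this

lemma adj_unmapped (i mF : ℕ) (hi1 : 1 ≤ i) (him : i ≤ mF) (A : Finset ℕ)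
    (hA1 : ∀ a ∈ A, 1 ≤ a ∧ a ≤ mF) (hiA : i ∉ A) (hfull : ∀ k, i < k → k ≤ mF → k ∈ A)
    (k : ℕ) (hk1 : 1 ≤ k) (hk2 : k ≤ mF - 1) :
    ((∀ a ∈ A, adjIdx i a ≠ k) ↔ (∀ a ∈ A, a ≠ k) ∧ k < i) := by
  constructor
  · intro h
    have hki : k < i := by
      by_contra hge
      have hm : k + 1 ∈ A := hfull (k+1) (by omega) (by omega)
      have hx := h (k+1) hm
      unfold adjIdx at hx
      rw [if_neg (by omega)] at hx
      omega
    refine ⟨?_, hki⟩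
    intro a haA hak
    have hx := h a haA
    unfold adjIdx at hx
    rw [if_pos (by omega)] at hx
    exact hx hak
  · rintro ⟨hun, hki⟩ a haA
    have hai : a ≠ i := fun h => hiA (h ▸ haA)
    have hb := hA1 a haA
    unfold adjIdx
    split_ifs with h
    · exact hun a haA
    · omega

theorem dels_inss : ∀ (N : ℕ) (F G : Forest α) (M : Finset (ℕ × ℕ)),
    fsize F + fsize G ≤ N →
    IsTreeMapping F G M →
    (∀ p ∈ M, labelAt F p.1 = labelAt G p.2) →
    ∃ δ : List (Edit α),
      applyScript δ F = G ∧
      (∀ i, 1 ≤ i → i ≤ fsize F → (∀ p ∈ M, p.1 ≠ i) → Edit.del i ∈ δ) ∧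
      (∀ j, 1 ≤ j → j ≤ fsize G → (∀ p ∈ M, p.2 ≠ j) →
        ∃ y i l r, labelAt G j = some y ∧ Edit.ins i y l r ∈ δ) ∧
      (∀ e ∈ δ,
        (∃ i, 1 ≤ i ∧ i ≤ fsize F ∧ (∀ p ∈ M, p.1 ≠ i) ∧ e = Edit.del i) ∨
        (∃ j, 1 ≤ j ∧ j ≤ fsize G ∧ (∀ p ∈ M, p.2 ≠ j) ∧
          ∃ y i l r, labelAt G j = some y ∧ e = Edit.ins i y l r))
  | N, F, G, M, hN, hM, hlab => by
    classical
    obtain ⟨hbound, hrel⟩ := hM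
    by_cases hSFne : ((Finset.Icc 1 (fsize F)).filter (fun i => ∀ p ∈ M, p.1 ≠ i)).Nonempty
    · -- deletion step
      set SF := (Finset.Icc 1 (fsize F)).filter (fun i => ∀ p ∈ M, p.1 ≠ i) with hSFdef
      set i := SF.max' hSFne with hidef
      have hiS : i ∈ SF := SF.max'_mem hSFne
      have hiIcc := (Finset.mem_filter.mp hiS).1
      have hiun : ∀ p ∈ M, p.1 ≠ i := (Finset.mem_filter.mp hiS).2
      have hi1 : 1 ≤ i := (Finset.mem_Icc.mp hiIcc).1
      have him : i ≤ fsize F := (Finset.mem_Icc.mp hiIcc).2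
      have hfull1 : ∀ k, i < k → k ≤ fsize F → ∃ p ∈ M, p.1 = k := by
        intro k hik hkm
        by_contra h
        push_neg at h
        have : k ∈ SF := Finset.mem_filter.mpr
          ⟨Finset.mem_Icc.mpr ⟨by omega, hkm⟩, fun p hp => h p hp⟩
        have := SF.le_max' k this
        omega
      obtain ⟨hf, hldel, hsdel, hrdel⟩ := del_spec F i hi1 him
      set M' := M.image (fun p => (adjIdx i p.1, p.2)) with hM'def
      have hmem' : ∀ p' ∈ M', ∃ p ∈ M, (adjIdx i p.1, p.2) = p' := by
        intro p' hp'
        exact Finset.mem_image.mp hp'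
      have hmemM : ∀ p ∈ M, (adjIdx i p.1, p.2) ∈ M' := by
        intro p hp
        exact Finset.mem_image_of_mem _ hp
      have hFpos : 1 ≤ fsize F := by omega
      have hMap' : IsTreeMapping (applyDel i F) G M' := by
        constructor
        · intro p' hp'
          obtain ⟨p, hp, rfl⟩ := hmem' p' hp'
          have hb := hbound p hp
          have hpi := hiun p hp
          refine ⟨?_, ?_, hb.2.2.1, hb.2.2.2⟩
          · show 1 ≤ adjIdx i p.1
            unfold adjIdx; split_ifs <;> omega
          · show adjIdx i p.1 ≤ fsize (applyDel i F)
            rw [hf]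
            unfold adjIdx; split_ifs <;> omega
        · intro p' hp' q' hq'
          obtain ⟨p, hp, rfl⟩ := hmem' p' hp'
          obtain ⟨q, hq, rfl⟩ := hmem' q' hq'
          have hbp := hbound p hp
          have hbq := hbound q hq
          have h3 := hrel p hp q hq
          refine ⟨?_, ?_, ?_⟩
          · exact (adjIdx_eq_iff i p.1 q.1 hbp.1 hbq.1 (hiun p hp) (hiun q hq)).trans h3.1
          · exact (adjIdx_le_iff i p.1 q.1 hbp.1 hbq.1 (hiun p hp) (hiun q hq)).trans h3.2.1
          · exact (anc_del' F i hi1 him p.1 q.1 hbp.1 hbp.2.1 (hiun p hp)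
              (hiun q hq)).trans h3.2.2
      have hlab' : ∀ p' ∈ M', labelAt (applyDel i F) p'.1 = labelAt G p'.2 := by
        intro p' hp'
        obtain ⟨p, hp, rfl⟩ := hmem' p' hp'
        have hb := hbound p hp
        show labelAt (applyDel i F) (adjIdx i p.1) = labelAt G p.2
        rw [del_label_adj F i hi1 him p.1 hb.1 (hiun p hp)]
        exact hlab p hp
      -- unmapped transfer for first components
      have hglue : ∀ k, (∀ p' ∈ M', p'.1 ≠ k) ↔ (∀ a ∈ M.image Prod.fst, adjIdx i a ≠ k) := by
        intro k
        constructor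
        · intro h a ha
          obtain ⟨p, hp, rfl⟩ := Finset.mem_image.mp ha
          exact h (adjIdx i p.1, p.2) (hmemM p hp)
        · intro h p' hp'
          obtain ⟨p, hp, rfl⟩ := hmem' p' hp'
          exact h p.1 (Finset.mem_image_of_mem _ hp)
      have hA1 : ∀ a ∈ M.image Prod.fst, 1 ≤ a ∧ a ≤ fsize F := by
        intro a ha
        obtain ⟨p, hp, rfl⟩ := Finset.mem_image.mp ha
        exact ⟨(hbound p hp).1, (hbound p hp).2.1⟩
      have hiA : i ∉ M.image Prod.fst := by
        intro h
        obtain ⟨p, hp, hpe⟩ := Finset.mem_image.mp h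
        exact hiun p hp hpe
      have hfullA : ∀ k, i < k → k ≤ fsize F → k ∈ M.image Prod.fst := by
        intro k h1 h2
        obtain ⟨p, hp, rfl⟩ := hfull1 k h1 h2
        exact Finset.mem_image_of_mem _ hp
      have hunm : ∀ k, 1 ≤ k → k ≤ fsize F - 1 →
          ((∀ p' ∈ M', p'.1 ≠ k) ↔ (∀ p ∈ M, p.1 ≠ k) ∧ k < i) := by
        intro k hk1 hk2
        rw [hglue k]
        rw [adj_unmapped i (fsize F) hi1 him (M.image Prod.fst) hA1 hiA hfullA k hk1 hk2]
        constructor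
        · rintro ⟨h, hki⟩
          exact ⟨fun p hp => h p.1 (Finset.mem_image_of_mem _ hp), hki⟩
        · rintro ⟨h, hki⟩
          refine ⟨?_, hki⟩
          intro a ha
          obtain ⟨p, hp, rfl⟩ := Finset.mem_image.mp ha
          exact h p hp
      -- second components unchanged
      have hsec : ∀ j, (∀ p' ∈ M', p'.2 ≠ j) ↔ (∀ p ∈ M, p.2 ≠ j) := by
        intro j
        constructor
        · intro h p hp
          exact h (adjIdx i p.1, p.2) (hmemM p hp)
        · intro h p' hp'
          obtain ⟨p, hp, rfl⟩ := hmem' p' hp'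
          exact h p hp
      obtain ⟨δ', happ, hdelc, hinsc, hsound⟩ :=
        dels_inss (N-1) (applyDel i F) G M' (by rw [hf]; omega) hMap' hlab'
      refine ⟨Edit.del i :: δ', ?_, ?_, ?_, ?_⟩
      · rw [applyScript_cons]
        exact happ
      · intro i0 h1 h2 hun0
        by_cases he : i0 = i
        · subst he; exact List.mem_cons_self
        · have hi0 : i0 < i := by
            have : i0 ∈ SF := Finset.mem_filter.mpr ⟨Finset.mem_Icc.mpr ⟨h1, h2⟩, hun0⟩
            have := SF.le_max' i0 this
            omega
          have : Edit.del i0 ∈ δ' := by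
            apply hdelc i0 h1 (by rw [hf]; omega)
            rw [hunm i0 h1 (by omega)]
            exact ⟨hun0, hi0⟩
          exact List.mem_cons_of_mem _ this
      · intro j0 h1 h2 hun0
        obtain ⟨y, i', l, r, hy, hm⟩ := hinsc j0 h1 h2 ((hsec j0).mpr hun0)
        exact ⟨y, i', l, r, hy, List.mem_cons_of_mem _ hm⟩
      · intro e he
        rcases List.mem_cons.mp he with rfl | he'
        · exact Or.inl ⟨i, hi1, him, hiun, rfl⟩
        · rcases hsound e he' with ⟨i'', h1'', h2'', hun'', rfl⟩ | ⟨j'', h1'', h2'', hun'', hrest⟩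
          · left
            refine ⟨i'', h1'', by omega, ?_, rfl⟩
            rw [hf] at h2''
            exact ((hunm i'' h1'' h2'').mp hun'').1
          · right
            exact ⟨j'', h1'', h2'', (hsec j'').mp hun'', hrest⟩
    · -- F fully mapped
      have hsurj1 : ∀ i0, 1 ≤ i0 → i0 ≤ fsize F → ∃ p ∈ M, p.1 = i0 := by
        intro i0 h1 h2
        by_contra h
        push_neg at h
        exact hSFne ⟨i0, Finset.mem_filter.mpr ⟨Finset.mem_Icc.mpr ⟨h1, h2⟩,
          fun p hp => h p hp⟩⟩
      by_cases hSGne : ((Finset.Icc 1 (fsize G)).filter (fun j => ∀ p ∈ M, p.2 ≠ j)).Nonempty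
      · -- insertion step
        set SG := (Finset.Icc 1 (fsize G)).filter (fun j => ∀ p ∈ M, p.2 ≠ j) with hSGdef
        set j := SG.max' hSGne with hjdef
        have hjS : j ∈ SG := SG.max'_mem hSGne
        have hjIcc := (Finset.mem_filter.mp hjS).1
        have hjun : ∀ p ∈ M, p.2 ≠ j := (Finset.mem_filter.mp hjS).2
        have hj1 : 1 ≤ j := (Finset.mem_Icc.mp hjIcc).1
        have hjm : j ≤ fsize G := (Finset.mem_Icc.mp hjIcc).2
        have hfull2 : ∀ k, j < k → k ≤ fsize G → ∃ p ∈ M, p.2 = k := by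
          intro k hjk hkm
          by_contra h
          push_neg at h
          have : k ∈ SG := Finset.mem_filter.mpr
            ⟨Finset.mem_Icc.mpr ⟨by omega, hkm⟩, fun p hp => h p hp⟩
          have := SG.le_max' k this
          omega
        obtain ⟨hf, hldel, hsdel, hrdel⟩ := del_spec G j hj1 hjm
        set M' := M.image (fun p => (p.1, adjIdx j p.2)) with hM'def
        have hmem' : ∀ p' ∈ M', ∃ p ∈ M, (p.1, adjIdx j p.2) = p' := by
          intro p' hp'
          exact Finset.mem_image.mp hp'
        have hmemM : ∀ p ∈ M, (p.1, adjIdx j p.2) ∈ M' := by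
          intro p hp
          exact Finset.mem_image_of_mem _ hp
        have hMap' : IsTreeMapping F (applyDel j G) M' := by
          constructor
          · intro p' hp'
            obtain ⟨p, hp, rfl⟩ := hmem' p' hp'
            have hb := hbound p hp
            have hpj := hjun p hp
            refine ⟨hb.1, hb.2.1, ?_, ?_⟩
            · show 1 ≤ adjIdx j p.2
              unfold adjIdx; split_ifs <;> omega
            · show adjIdx j p.2 ≤ fsize (applyDel j G)
              rw [hf]
              unfold adjIdx; split_ifs <;> omega
          · intro p' hp' q' hq'
            obtain ⟨p, hp, rfl⟩ := hmem' p' hp'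
            obtain ⟨q, hq, rfl⟩ := hmem' q' hq'
            have hbp := hbound p hp
            have hbq := hbound q hq
            have h3 := hrel p hp q hq
            refine ⟨?_, ?_, ?_⟩
            · exact h3.1.trans
                (adjIdx_eq_iff j p.2 q.2 hbp.2.2.1 hbq.2.2.1 (hjun p hp) (hjun q hq)).symm
            · exact h3.2.1.trans
                (adjIdx_le_iff j p.2 q.2 hbp.2.2.1 hbq.2.2.1 (hjun p hp) (hjun q hq)).symm
            · exact h3.2.2.trans
                (anc_del' G j hj1 hjm p.2 q.2 hbp.2.2.1 hbp.2.2.2 (hjun p hp)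
                  (hjun q hq)).symm
        have hlab' : ∀ p' ∈ M', labelAt F p'.1 = labelAt (applyDel j G) p'.2 := by
          intro p' hp'
          obtain ⟨p, hp, rfl⟩ := hmem' p' hp'
          have hb := hbound p hp
          show labelAt F p.1 = labelAt (applyDel j G) (adjIdx j p.2)
          rw [del_label_adj G j hj1 hjm p.2 hb.2.2.1 (hjun p hp)]
          exact hlab p hp
        have hglue : ∀ k, (∀ p' ∈ M', p'.2 ≠ k) ↔
            (∀ a ∈ M.image Prod.snd, adjIdx j a ≠ k) := by
          intro k
          constructor
          · intro h a ha
            obtain ⟨p, hp, rfl⟩ := Finset.mem_image.mp ha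
            exact h (p.1, adjIdx j p.2) (hmemM p hp)
          · intro h p' hp'
            obtain ⟨p, hp, rfl⟩ := hmem' p' hp'
            exact h p.2 (Finset.mem_image_of_mem _ hp)
        have hA1 : ∀ a ∈ M.image Prod.snd, 1 ≤ a ∧ a ≤ fsize G := by
          intro a ha
          obtain ⟨p, hp, rfl⟩ := Finset.mem_image.mp ha
          exact ⟨(hbound p hp).2.2.1, (hbound p hp).2.2.2⟩
        have hjA : j ∉ M.image Prod.snd := by
          intro h
          obtain ⟨p, hp, hpe⟩ := Finset.mem_image.mp h
          exact hjun p hp hpe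
        have hfullA : ∀ k, j < k → k ≤ fsize G → k ∈ M.image Prod.snd := by
          intro k h1 h2
          obtain ⟨p, hp, rfl⟩ := hfull2 k h1 h2
          exact Finset.mem_image_of_mem _ hp
        have hunm : ∀ k, 1 ≤ k → k ≤ fsize G - 1 →
            ((∀ p' ∈ M', p'.2 ≠ k) ↔ (∀ p ∈ M, p.2 ≠ k) ∧ k < j) := by
          intro k hk1 hk2
          rw [hglue k]
          rw [adj_unmapped j (fsize G) hj1 hjm (M.image Prod.snd) hA1 hjA hfullA k hk1 hk2]
          constructor
          · rintro ⟨h, hkj⟩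
            exact ⟨fun p hp => h p.2 (Finset.mem_image_of_mem _ hp), hkj⟩
          · rintro ⟨h, hkj⟩
            refine ⟨?_, hkj⟩
            intro a ha
            obtain ⟨p, hp, rfl⟩ := Finset.mem_image.mp ha
            exact h p hp
        have hfst : ∀ k, (∀ p' ∈ M', p'.1 ≠ k) ↔ (∀ p ∈ M, p.1 ≠ k) := by
          intro k
          constructor
          · intro h p hp
            exact h (p.1, adjIdx j p.2) (hmemM p hp)
          · intro h p' hp'
            obtain ⟨p, hp, rfl⟩ := hmem' p' hp'
            exact h p hp
        obtain ⟨δ', happ, hdelc, hinsc, hsound⟩ :=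
          dels_inss (N-1) F (applyDel j G) M' (by rw [hf]; omega) hMap' hlab'
        obtain ⟨y, hy⟩ := labelAt_isSome G j hj1 hjm
        obtain ⟨i', l, r, hins, _, _, _, _⟩ := ins_undo G j hj1 hjm y hy
        refine ⟨δ' ++ [Edit.ins i' y l r], ?_, ?_, ?_, ?_⟩
        · rw [applyScript_append, happ]
          exact hins
        · intro i0 h1 h2 hun0
          have : Edit.del i0 ∈ δ' := hdelc i0 h1 h2 ((hfst i0).mpr hun0)
          exact List.mem_append_left _ this
        · intro j0 h1 h2 hun0
          by_cases he : j0 = j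
          · subst he
            exact ⟨y, i', l, r, hy, List.mem_append_right _ (List.mem_singleton_self _)⟩
          · have hj0 : j0 < j := by
              have : j0 ∈ SG := Finset.mem_filter.mpr ⟨Finset.mem_Icc.mpr ⟨h1, h2⟩, hun0⟩
              have := SG.le_max' j0 this
              omega
            obtain ⟨y0, i0, l0, r0, hy0, hm0⟩ := hinsc j0 h1 (by rw [hf]; omega)
              (by rw [hunm j0 h1 (by omega)]; exact ⟨hun0, hj0⟩)
            refine ⟨y0, i0, l0, r0, ?_, List.mem_append_left _ hm0⟩
            rw [← hy0]
            exact (hldel j0 h1 hj0).symm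
        · intro e he
          rcases List.mem_append.mp he with he' | he'
          · rcases hsound e he' with ⟨i'', h1'', h2'', hun'', rfl⟩ |
              ⟨j'', h1'', h2'', hun'', y'', i'', l'', r'', hy'', rfl⟩
            · exact Or.inl ⟨i'', h1'', h2'', (hfst i'').mp hun'', rfl⟩
            · right
              rw [hf] at h2''
              have hj'' := (hunm j'' h1'' h2'').mp hun''
              refine ⟨j'', h1'', by omega, hj''.1, y'', i'', l'', r'', ?_, rfl⟩
              rw [← hy'']
              exact (hldel j'' h1'' hj''.2).symm
          · have : e = Edit.ins i' y l r := List.mem_singleton.mp he'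
            subst this
            exact Or.inr ⟨j, hj1, hjm, hjun, y, i', l, r, hy, rfl⟩
      · -- both fully mapped
        have hsurj2 : ∀ j0, 1 ≤ j0 → j0 ≤ fsize G → ∃ p ∈ M, p.2 = j0 := by
          intro j0 h1 h2
          by_contra h
          push_neg at h
          exact hSGne ⟨j0, Finset.mem_filter.mpr ⟨Finset.mem_Icc.mpr ⟨h1, h2⟩,
            fun p hp => h p hp⟩⟩
        have hFG : F = G := mapping_total_eq F G M ⟨hbound, hrel⟩ hlab hsurj1 hsurj2
        refine ⟨[], by rw [applyScript_nil, hFG], ?_, ?_, ?_⟩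
        · intro i0 h1 h2 hun0
          obtain ⟨p, hp, hp1⟩ := hsurj1 i0 h1 h2
          exact absurd hp1 (hun0 p hp)
        · intro j0 h1 h2 hun0
          obtain ⟨p, hp, hp2⟩ := hsurj2 j0 h1 h2
          exact absurd hp2 (hun0 p hp)
        · intro e he
          exact absurd he List.not_mem_nil
  termination_by N _ _ _ _ _ _ => N
  decreasing_by all_goals omega
/-- For every tree mapping `M` between forests `X` and `Y` there is an
edit script `δ̄_M` with `δ̄_M(X) = Y` which contains the replacement `rep_{i, y_j}` for
each `(i,j) ∈ M`, the deletion `del_i` for each unmapped index `i` of `X`, an insertion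
of the label `y_j` for each unmapped index `j` of `Y`, and no other edits. -/
theorem mapping_to_script {α : Type} (F G : Forest α) (M : Finset (ℕ × ℕ))
    (hM : IsTreeMapping F G M) :
    ∃ δ : List (Edit α),
      applyScript δ F = G ∧
      (∀ p ∈ M, ∃ y : α, labelAt G p.2 = some y ∧ Edit.rep p.1 y ∈ δ) ∧
      (∀ i, 1 ≤ i → i ≤ fsize F → (∀ p ∈ M, p.1 ≠ i) → Edit.del i ∈ δ) ∧
      (∀ j, 1 ≤ j → j ≤ fsize G → (∀ p ∈ M, p.2 ≠ j) →
        ∃ (y : α) (i l r : ℕ), labelAt G j = some y ∧ Edit.ins i y l r ∈ δ) ∧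
      (∀ e ∈ δ,
        (∃ p ∈ M, ∃ y : α, labelAt G p.2 = some y ∧ e = Edit.rep p.1 y) ∨
        (∃ i, 1 ≤ i ∧ i ≤ fsize F ∧ (∀ p ∈ M, p.1 ≠ i) ∧ e = Edit.del i) ∨
        (∃ j, 1 ≤ j ∧ j ≤ fsize G ∧ (∀ p ∈ M, p.2 ≠ j) ∧
          ∃ (y : α) (i l r : ℕ), labelAt G j = some y ∧ e = Edit.ins i y l r)) := by
  classical
  obtain ⟨hbound, hrel⟩ := hM
  set L : List (ℕ × α) :=
    M.toList.filterMap (fun p => (labelAt G p.2).map (fun y => (p.1, y))) with hLdef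
  have hLmem : ∀ q ∈ L, ∃ p ∈ M, labelAt G p.2 = some q.2 ∧ q.1 = p.1 := by
    intro q hq
    rw [hLdef, List.mem_filterMap] at hq
    obtain ⟨p, hpL, hpe⟩ := hq
    cases hG : labelAt G p.2 with
    | none => rw [hG] at hpe; simp at hpe
    | some y =>
      rw [hG] at hpe
      simp only [Option.map_some, Option.some.injEq] at hpe
      refine ⟨p, Finset.mem_toList.mp hpL, ?_, ?_⟩
      · rw [hG, ← hpe]
      · rw [← hpe]
  have hLof : ∀ p ∈ M, ∃ y, labelAt G p.2 = some y ∧ (p.1, y) ∈ L := by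
    intro p hp
    obtain ⟨y, hy⟩ := labelAt_isSome G p.2 (hbound p hp).2.2.1 (hbound p hp).2.2.2
    refine ⟨y, hy, ?_⟩
    rw [hLdef, List.mem_filterMap]
    exact ⟨p, Finset.mem_toList.mpr hp, by rw [hy]; rfl⟩
  have hinj : ∀ p ∈ M, ∀ p' ∈ M, p.1 = p'.1 → p = p' := fun p hp p' hp' h =>
    Prod.ext h ((hrel p hp p' hp').1.mp h)
  have hLcons : ∀ q ∈ L, ∀ q' ∈ L, q'.1 = q.1 → q'.2 = q.2 := by
    intro q hq q' hq' h
    obtain ⟨p, hp, hy, h1⟩ := hLmem q hq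
    obtain ⟨p', hp', hy', h1'⟩ := hLmem q' hq'
    have hpp : p' = p := hinj p' hp' p hp (by rw [← h1', ← h1, h])
    rw [hpp] at hy'
    rw [hy] at hy'
    exact Option.some_injective _ hy'.symm
  obtain ⟨rf, rs, rl, ry⟩ := repScript_spec L F
  set δ₁ := L.map (fun q => Edit.rep q.1 q.2) with hδ₁def
  set F₁ := applyScript δ₁ F with hF₁def
  have hlab1 : ∀ p ∈ M, labelAt F₁ p.1 = labelAt G p.2 := by
    intro p hp
    obtain ⟨y, hy, hmem⟩ := hLof p hp
    rw [hy]
    exact ry (p.1, y) hmem (hLcons (p.1, y) hmem) (hbound p hp).1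
      (hbound p hp).2.1
  have hM1 : IsTreeMapping F₁ G M := by
    constructor
    · intro p hp
      have hb := hbound p hp
      exact ⟨hb.1, by rw [hF₁def, hδ₁def, rf]; exact hb.2.1, hb.2.2.1, hb.2.2.2⟩
    · intro p hp q hq
      have h3 := hrel p hp q hq
      refine ⟨h3.1, h3.2.1, ?_⟩
      have hAnc : AncestorIdx F₁ p.1 q.1 ↔ AncestorIdx F p.1 q.1 := by
        unfold AncestorIdx
        rw [hF₁def, hδ₁def, rs p.1 (hbound p hp).1]
      rw [hAnc]
      exact h3.2.2
  obtain ⟨δ₂, happ, hdelc, hinsc, hsound⟩ :=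
    dels_inss (fsize F₁ + fsize G) F₁ G M le_rfl hM1 hlab1
  refine ⟨δ₁ ++ δ₂, ?_, ?_, ?_, ?_, ?_⟩
  · rw [applyScript_append]
    exact happ
  · intro p hp
    obtain ⟨y, hy, hmem⟩ := hLof p hp
    exact ⟨y, hy, List.mem_append_left _ (List.mem_map.mpr ⟨(p.1, y), hmem, rfl⟩)⟩
  · intro i h1 h2 hun
    refine List.mem_append_right _ (hdelc i h1 ?_ hun)
    rw [hF₁def, hδ₁def, rf]
    exact h2
  · intro j h1 h2 hun
    obtain ⟨y, i, l, r, hy, hm⟩ := hinsc j h1 h2 hun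
    exact ⟨y, i, l, r, hy, List.mem_append_right _ hm⟩
  · intro e he
    rcases List.mem_append.mp he with he1 | he2
    · left
      obtain ⟨q, hqL, rfl⟩ := List.mem_map.mp he1
      obtain ⟨p, hp, hy, h1⟩ := hLmem q hqL
      exact ⟨p, hp, q.2, hy, by rw [h1]⟩
    · rcases hsound e he2 with ⟨i, h1, h2, hun, rfl⟩ | hins
      · right; left
        refine ⟨i, h1, ?_, hun, rfl⟩
        rw [hF₁def, hδ₁def, rf] at h2
        exact h2
      · right; right
        exact hins

end TED
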